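/- arXiv:1509.06056 — 4 statements merged into one kernel-verified Lean document; each statement's English description precedes it below -/
import Mathlib

section
/- Define meromorphic-type integrals I₁(k) = ∫₀^{2π} (k sin² φ)/√(1 - k² cos² φ) dφ and I₂(k) = ∫₀^{2π} √(1 - k² cos² φ) dφ for 0 < k < 1 (real). Then for 0 < k < 1, I₁ and I₂ are the derivatives ∂𝔥/∂z₁ and ∂𝔥/∂z₂ (up to factor 1/π²) where 𝔥(z₁,z₂) = (1/(2π)²) ∫₀^{2π}∫₀^{2π} |z₁ cos φ₁ + z₂ cos φ₂| dφ₁ dφ₂ evaluated at z₁ = k, z₂ = 1. Precisely: π² ∂𝔥/∂z₁ (k,1) = I₁(k) and π² ∂𝔥/∂z₂ (k,1) = I₂(k) for 0 < k < 1. -/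
open Real MeasureTheory

section aux

open intervalIntegral

lemma integral_abs_cos_add (b : ℝ) (hb : |b| ≤ 1) :
    ∫ φ in (0:ℝ)..(2*π), |Real.cos φ + b| =
      4 * Real.sqrt (1 - b ^ 2) + 4 * b * Real.arcsin b := by
  obtain ⟨hb1, hb2⟩ := abs_le.mp hb
  set c := Real.arccos (-b) with hcdef
  have hc0 : 0 ≤ c := Real.arccos_nonneg _
  have hcπ : c ≤ π := Real.arccos_le_pi _
  have hcos : Real.cos c = -b := Real.cos_arccos (by linarith) (by linarith)
  have hπ : 0 < π := Real.pi_pos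
  have hcont : Continuous fun φ => |Real.cos φ + b| :=
    (Real.continuous_cos.add continuous_const).abs
  have key : ∀ u v : ℝ, (∫ φ in u..v, (Real.cos φ + b)) =
      (Real.sin v - Real.sin u) + b * (v - u) := by
    intro u v
    rw [integral_add (Real.continuous_cos.intervalIntegrable _ _)
      (continuous_const.intervalIntegrable _ _), integral_cos, intervalIntegral.integral_const]
    simp [smul_eq_mul]; ring
  have hsplit : (∫ φ in (0:ℝ)..(2*π), |Real.cos φ + b|) =
      (∫ φ in (0:ℝ)..c, |Real.cos φ + b|) +
      (∫ φ in c..(2*π - c), |Real.cos φ + b|) +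
      (∫ φ in (2*π - c)..(2*π), |Real.cos φ + b|) := by
    rw [integral_add_adjacent_intervals (hcont.intervalIntegrable _ _)
        (hcont.intervalIntegrable _ _),
      integral_add_adjacent_intervals (hcont.intervalIntegrable _ _)
        (hcont.intervalIntegrable _ _)]
  have h1 : (∫ φ in (0:ℝ)..c, |Real.cos φ + b|) = ∫ φ in (0:ℝ)..c, (Real.cos φ + b) := by
    apply integral_congr
    intro φ hφ
    rw [Set.uIcc_of_le hc0] at hφ; obtain ⟨hφ1, hφ2⟩ := hφ
    have : Real.cos c ≤ Real.cos φ :=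
      Real.cos_le_cos_of_nonneg_of_le_pi hφ1 hcπ hφ2
    rw [hcos] at this
    exact abs_of_nonneg (by linarith)
  have h2 : (∫ φ in c..(2*π - c), |Real.cos φ + b|) =
      ∫ φ in c..(2*π - c), -(Real.cos φ + b) := by
    apply integral_congr
    intro φ hφ
    rw [Set.uIcc_of_le (by linarith)] at hφ; obtain ⟨hφ1, hφ2⟩ := hφ
    have hle : Real.cos φ ≤ Real.cos c := by
      rcases le_total φ π with h | h
      · exact Real.cos_le_cos_of_nonneg_of_le_pi hc0 h hφ1
      · rw [← Real.cos_two_pi_sub]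
        exact Real.cos_le_cos_of_nonneg_of_le_pi hc0 (by linarith) (by linarith)
    rw [hcos] at hle
    exact abs_of_nonpos (by linarith)
  have h3 : (∫ φ in (2*π - c)..(2*π), |Real.cos φ + b|) =
      ∫ φ in (2*π - c)..(2*π), (Real.cos φ + b) := by
    apply integral_congr
    intro φ hφ
    rw [Set.uIcc_of_le (by linarith)] at hφ; obtain ⟨hφ1, hφ2⟩ := hφ
    have : Real.cos c ≤ Real.cos (2*π - φ) :=
      Real.cos_le_cos_of_nonneg_of_le_pi (by linarith) hcπ (by linarith)
    rw [hcos, Real.cos_two_pi_sub] at this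
    exact abs_of_nonneg (by linarith)
  rw [hsplit, h1, h2, h3, intervalIntegral.integral_neg, key, key, key]
  have hsin : Real.sin c = Real.sqrt (1 - b ^ 2) := by
    rw [hcdef, Real.sin_arccos]; ring_nf
  have hceq : c = π / 2 + Real.arcsin b := by
    rw [hcdef, Real.arccos_neg, Real.arccos_eq_pi_div_two_sub_arcsin]; ring
  rw [Real.sin_two_pi_sub, Real.sin_two_pi, Real.sin_zero, hsin, hceq]
  ring


lemma integral_abs_amp_cos_add (a b : ℝ) (ha : 0 < a) (hb : |b| ≤ a) :
    ∫ φ in (0:ℝ)..(2*π), |a * Real.cos φ + b| =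
      4 * Real.sqrt (a ^ 2 - b ^ 2) + 4 * b * Real.arcsin (b / a) := by
  have ha' : a ≠ 0 := ne_of_gt ha
  have hba : |b / a| ≤ 1 := by
    rw [abs_div, abs_of_pos ha, div_le_one ha]; exact hb
  have h1 : ∀ φ : ℝ, |a * Real.cos φ + b| = a * |Real.cos φ + b / a| := by
    intro φ
    have h2 : a * (Real.cos φ + b / a) = a * Real.cos φ + b := by field_simp
    rw [← h2, abs_mul, abs_of_pos ha]
  calc (∫ φ in (0:ℝ)..(2*π), |a * Real.cos φ + b|)
      = ∫ φ in (0:ℝ)..(2*π), a * |Real.cos φ + b / a| := by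
        exact integral_congr fun φ _ => h1 φ
    _ = a * ∫ φ in (0:ℝ)..(2*π), |Real.cos φ + b / a| := integral_const_mul _ _
    _ = a * (4 * Real.sqrt (1 - (b/a) ^ 2) + 4 * (b/a) * Real.arcsin (b/a)) := by
        rw [integral_abs_cos_add _ hba]
    _ = 4 * Real.sqrt (a ^ 2 - b ^ 2) + 4 * b * Real.arcsin (b / a) := by
        have : a * Real.sqrt (1 - (b/a)^2) = Real.sqrt (a^2 - b^2) := by
          rw [← Real.sqrt_sq ha.le, ← Real.sqrt_mul (by positivity)]
          congr 1
          field_simp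
          rw [Real.sq_sqrt (sq_nonneg a)]
        rw [mul_add, ← mul_assoc, ← mul_assoc, mul_comm a 4, mul_assoc 4 a, this]
        field_simp


lemma hasDeriv_F (b t : ℝ) (ht : |t * b| < 1) :
    HasDerivAt (fun x : ℝ => 4 * Real.sqrt (1 - (x * b) ^ 2)
        + 4 * (x * b) * Real.arcsin (x * b))
      (4 * b * Real.arcsin (t * b)) t := by
  have hX : 0 < 1 - (t * b) ^ 2 := by
    have := (sq_lt_one_iff_abs_lt_one (t*b)).mpr ht
    linarith
  have hs : Real.sqrt (1 - (t * b) ^ 2) ≠ 0 := by positivity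
  have hne1 : t * b ≠ -1 := by intro h; rw [h] at ht; simp at ht
  have hne2 : t * b ≠ 1 := by intro h; rw [h] at ht; simp at ht
  have hx : HasDerivAt (fun x : ℝ => x * b) b t := hasDerivAt_mul_const b
  have h1 : HasDerivAt (fun x : ℝ => 1 - (x * b) ^ 2)
      (-(2 * (t * b) ^ 1 * b)) t := (hx.pow 2).const_sub 1
  have h2 : HasDerivAt (fun x : ℝ => Real.sqrt (1 - (x * b) ^ 2))
      (1 / (2 * Real.sqrt (1 - (t * b) ^ 2)) * -(2 * (t * b) ^ 1 * b)) t :=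
    (Real.hasDerivAt_sqrt hX.ne').comp t h1
  have h3 : HasDerivAt (fun x : ℝ => Real.arcsin (x * b))
      (1 / Real.sqrt (1 - (t * b) ^ 2) * b) t :=
    by have := (Real.hasDerivAt_arcsin hne1 hne2).comp t hx; exact this
  have h4 : HasDerivAt (fun x : ℝ => (x * b) * Real.arcsin (x * b))
      (b * Real.arcsin (t * b) + (t * b) * (1 / Real.sqrt (1 - (t * b) ^ 2) * b)) t :=
    hx.mul h3
  have h6 : HasDerivAt (fun x : ℝ => 4 * Real.sqrt (1 - (x * b) ^ 2)
      + 4 * ((x * b) * Real.arcsin (x * b)))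
      (4 * (1 / (2 * Real.sqrt (1 - (t * b) ^ 2)) * -(2 * (t * b) ^ 1 * b))
        + 4 * (b * Real.arcsin (t * b) + (t * b) * (1 / Real.sqrt (1 - (t * b) ^ 2) * b))) t :=
    (h2.const_mul 4).add (h4.const_mul 4)
  have heq : (4 * (1 / (2 * Real.sqrt (1 - (t * b) ^ 2)) * -(2 * (t * b) ^ 1 * b))
        + 4 * (b * Real.arcsin (t * b) + (t * b) * (1 / Real.sqrt (1 - (t * b) ^ 2) * b)))
      = 4 * b * Real.arcsin (t * b) := by
    have h := Real.sq_sqrt hX.le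
    field_simp
    ring
  rw [heq] at h6
  convert h6 using 2 with x
  ring


lemma hasDeriv_G (b t : ℝ) (hbt : |b| < t) :
    HasDerivAt (fun x : ℝ => 4 * Real.sqrt (x ^ 2 - b ^ 2)
        + 4 * b * Real.arcsin (b / x))
      (4 * Real.sqrt (t ^ 2 - b ^ 2) / t) t := by
  have ht0 : 0 < t := lt_of_le_of_lt (abs_nonneg b) hbt
  obtain ⟨hb1, hb2⟩ := abs_lt.mp hbt
  have hX : 0 < t ^ 2 - b ^ 2 := by nlinarith [sq_lt_sq' hb1 hb2]
  set s := Real.sqrt (t ^ 2 - b ^ 2) with hsdef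
  have hs0 : 0 < s := Real.sqrt_pos.mpr hX
  have hs : s ^ 2 = t ^ 2 - b ^ 2 := Real.sq_sqrt hX.le
  have hbtq : |b / t| < 1 := by
    rw [abs_div, abs_of_pos ht0, div_lt_one ht0]; exact hbt
  have hne1 : b / t ≠ -1 := by intro h; rw [h] at hbtq; simp at hbtq
  have hne2 : b / t ≠ 1 := by intro h; rw [h] at hbtq; simp at hbtq
  have h1 : HasDerivAt (fun x : ℝ => x ^ 2 - b ^ 2) (2 * t ^ 1) t := by
    simpa using ((hasDerivAt_id t).pow 2).sub_const (b ^ 2)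
  have h2 : HasDerivAt (fun x : ℝ => Real.sqrt (x ^ 2 - b ^ 2))
      (1 / (2 * s) * (2 * t ^ 1)) t := (Real.hasDerivAt_sqrt hX.ne').comp t h1
  have hinv : HasDerivAt (fun x : ℝ => b / x) (b * -(t ^ 2)⁻¹) t := by
    simpa [div_eq_mul_inv] using (hasDerivAt_inv ht0.ne').const_mul b
  have h3 : HasDerivAt (fun x : ℝ => Real.arcsin (b / x))
      (1 / Real.sqrt (1 - (b / t) ^ 2) * (b * -(t ^ 2)⁻¹)) t :=
    (Real.hasDerivAt_arcsin hne1 hne2).comp t hinv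
  have hsq : Real.sqrt (1 - (b / t) ^ 2) = s / t := by
    have : 1 - (b / t) ^ 2 = (s / t) ^ 2 := by
      rw [div_pow, div_pow, hs]; field_simp
    rw [this, Real.sqrt_sq (by positivity)]
  rw [hsq] at h3
  have heq : 4 * (1 / (2 * s) * (2 * t ^ 1)) + 4 * b * (1 / (s / t) * (b * -(t ^ 2)⁻¹))
      = 4 * s / t := by
    field_simp
    linear_combination (-1) * hs
  have h7 := (h2.const_mul 4).add (h3.const_mul (4 * b))
  rw [heq] at h7
  exact h7


end aux

/-- The support-function kernel 𝔥(z₁,z₂) = (2π)⁻² ∫₀^{2π}∫₀^{2π} |z₁cos φ₁ + z₂cos φ₂|. -/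
noncomputable def frakH (z₁ z₂ : ℝ) : ℝ :=
  (2 * π)⁻¹ ^ 2 *
    ∫ φ₁ in (0:ℝ)..(2 * π), ∫ φ₂ in (0:ℝ)..(2 * π),
      |z₁ * Real.cos φ₁ + z₂ * Real.cos φ₂|

noncomputable def I₁ (k : ℝ) : ℝ :=
  ∫ φ in (0:ℝ)..(2 * π), k * Real.sin φ ^ 2 / Real.sqrt (1 - k ^ 2 * Real.cos φ ^ 2)

noncomputable def I₂ (k : ℝ) : ℝ :=
  ∫ φ in (0:ℝ)..(2 * π), Real.sqrt (1 - k ^ 2 * Real.cos φ ^ 2)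

section aux2

open intervalIntegral

lemma frakH_left (t : ℝ) (ht : |t| ≤ 1) :
    frakH t 1 = (2 * π)⁻¹ ^ 2 *
      ∫ φ in (0:ℝ)..(2*π),
        (4 * Real.sqrt (1 - (t * Real.cos φ) ^ 2)
          + 4 * (t * Real.cos φ) * Real.arcsin (t * Real.cos φ)) := by
  unfold frakH
  congr 1
  apply integral_congr
  intro φ hφ
  have hb : |t * Real.cos φ| ≤ 1 := by
    rw [abs_mul]
    exact mul_le_one₀ ht (abs_nonneg _) (Real.abs_cos_le_one φ)
  calc (∫ φ₂ in (0:ℝ)..(2*π), |t * Real.cos φ + 1 * Real.cos φ₂|)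
      = ∫ φ₂ in (0:ℝ)..(2*π), |Real.cos φ₂ + t * Real.cos φ| := by
        apply integral_congr; intro ψ _; simp only []; rw [one_mul, add_comm]
    _ = _ := integral_abs_cos_add _ hb


lemma frakH_right (k t : ℝ) (hk : 0 ≤ k) (hkt : k < t) :
    frakH k t = (2 * π)⁻¹ ^ 2 *
      ∫ φ in (0:ℝ)..(2*π),
        (4 * Real.sqrt (t ^ 2 - (k * Real.cos φ) ^ 2)
          + 4 * (k * Real.cos φ) * Real.arcsin (k * Real.cos φ / t)) := by
  unfold frakH
  congr 1
  apply integral_congr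
  intro φ hφ
  have hb : |k * Real.cos φ| ≤ t := by
    rw [abs_mul, abs_of_nonneg hk]
    calc k * |Real.cos φ| ≤ k * 1 := by
          exact mul_le_mul_of_nonneg_left (Real.abs_cos_le_one φ) hk
      _ ≤ t := by linarith
  calc (∫ φ₂ in (0:ℝ)..(2*π), |k * Real.cos φ + t * Real.cos φ₂|)
      = ∫ φ₂ in (0:ℝ)..(2*π), |t * Real.cos φ₂ + k * Real.cos φ| := by
        apply integral_congr; intro ψ _; simp only []; rw [add_comm]
    _ = _ := integral_abs_amp_cos_add t _ (lt_of_le_of_lt hk hkt) hb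


lemma parts1 (k : ℝ) (hk0 : 0 ≤ k) (hk1 : k < 1) :
    (∫ φ in (0:ℝ)..(2*π), Real.cos φ * Real.arcsin (k * Real.cos φ)) = I₁ k := by
  have hπ : 0 < π := Real.pi_pos
  have hX : ∀ φ : ℝ, 0 < 1 - (k * Real.cos φ) ^ 2 := by
    intro φ
    have h1 : |k * Real.cos φ| < 1 :=
      lt_of_le_of_lt (by rw [abs_mul, abs_of_nonneg hk0]
                         calc k * |Real.cos φ| ≤ k * 1 :=
                                mul_le_mul_of_nonneg_left (Real.abs_cos_le_one φ) hk0
                           _ = k := mul_one k) hk1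
    nlinarith [sq_lt_one_iff_abs_lt_one (k * Real.cos φ) |>.mpr h1]
  have hne : ∀ φ : ℝ, Real.sqrt (1 - (k * Real.cos φ) ^ 2) ≠ 0 :=
    fun φ => ne_of_gt (Real.sqrt_pos.mpr (hX φ))
  set v' : ℝ → ℝ :=
    fun φ => 1 / Real.sqrt (1 - (k * Real.cos φ) ^ 2) * (k * -Real.sin φ) with hv'def
  have hv : ∀ φ : ℝ, HasDerivAt (fun ψ => Real.arcsin (k * Real.cos ψ)) (v' φ) φ := by
    intro φ
    have h1 : k * Real.cos φ ≠ -1 := by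
      intro h; have := hX φ; rw [h] at this; norm_num at this
    have h2 : k * Real.cos φ ≠ 1 := by
      intro h; have := hX φ; rw [h] at this; norm_num at this
    exact (Real.hasDerivAt_arcsin h1 h2).comp φ ((Real.hasDerivAt_cos φ).const_mul k)
  have hgcont : Continuous fun φ => Real.sqrt (1 - (k * Real.cos φ) ^ 2) := by fun_prop
  have hv'cont : Continuous v' :=
    (continuous_const.div hgcont hne).mul (by fun_prop)
  have hparts := intervalIntegral.integral_mul_deriv_eq_deriv_mul
    (a := (0:ℝ)) (b := 2*π)
    (u := Real.sin) (v := fun φ => Real.arcsin (k * Real.cos φ))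
    (u' := Real.cos) (v' := v')
    (fun x _ => Real.hasDerivAt_sin x) (fun x _ => hv x)
    (Real.continuous_cos.intervalIntegrable _ _) (hv'cont.intervalIntegrable _ _)
  have hbd : Real.sin (2*π) * Real.arcsin (k * Real.cos (2*π))
      - Real.sin 0 * Real.arcsin (k * Real.cos 0) = 0 := by
    simp [Real.sin_two_pi]
  rw [hbd, zero_sub] at hparts
  -- hparts : ∫ sin φ * v' φ = - ∫ cos φ * arcsin (k cos φ)
  have hcongr : (∫ φ in (0:ℝ)..(2*π), Real.sin φ * v' φ)
      = ∫ φ in (0:ℝ)..(2*π), -(k * Real.sin φ ^ 2 / Real.sqrt (1 - k ^ 2 * Real.cos φ ^ 2)) := by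
    apply integral_congr
    intro φ _
    have h2 : (k * Real.cos φ) ^ 2 = k ^ 2 * Real.cos φ ^ 2 := by ring
    simp only [hv'def]
    rw [← h2]
    field_simp
  rw [hcongr, intervalIntegral.integral_neg] at hparts
  unfold I₁
  linarith [hparts]


lemma abs_arcsin_le (y : ℝ) : |Real.arcsin y| ≤ π / 2 :=
  abs_le.mpr ⟨neg_le_of_neg_le (by linarith [Real.neg_pi_div_two_le_arcsin y]),
    Real.arcsin_le_pi_div_two y⟩

lemma part_one (k : ℝ) (hk0 : 0 < k) (hk1 : k < 1) :
    HasDerivAt (fun t => frakH t 1) (I₁ k / π ^ 2) k := by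
  have hπ : 0 < π := Real.pi_pos
  set ε : ℝ := (1 - k) / 2 with hεdef
  have hε : 0 < ε := by rw [hεdef]; linarith
  have hball : ∀ x ∈ Metric.ball k ε, |x| < 1 := by
    intro x hx
    rw [Metric.mem_ball, Real.dist_eq] at hx
    calc |x| = |(x - k) + k| := by ring_nf
      _ ≤ |x - k| + |k| := abs_add_le _ _
      _ < ε + k := by rw [abs_of_pos hk0]; linarith
      _ < 1 := by rw [hεdef]; linarith
  set F : ℝ → ℝ → ℝ := fun x φ => 4 * Real.sqrt (1 - (x * Real.cos φ) ^ 2)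
      + 4 * (x * Real.cos φ) * Real.arcsin (x * Real.cos φ) with hFdef
  set F' : ℝ → ℝ → ℝ := fun x φ => 4 * Real.cos φ * Real.arcsin (x * Real.cos φ) with hF'def
  have hFcont : ∀ x : ℝ, Continuous (F x) := by
    intro x
    apply Continuous.add
    · exact (continuous_const.mul ((continuous_const.sub
        (((continuous_const.mul Real.continuous_cos).pow 2))).sqrt))
    · exact ((continuous_const.mul (continuous_const.mul Real.continuous_cos)).mul
        (Real.continuous_arcsin.comp (continuous_const.mul Real.continuous_cos)))
  have hF'cont : ∀ x : ℝ, Continuous (F' x) := by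
    intro x
    exact ((continuous_const.mul Real.continuous_cos).mul
      (Real.continuous_arcsin.comp (continuous_const.mul Real.continuous_cos)))
  have main := intervalIntegral.hasDerivAt_integral_of_dominated_loc_of_deriv_le
    (F := F) (F' := F') (x₀ := k) (a := 0) (b := 2 * π) (μ := volume)
    (bound := fun _ => 2 * π + 4) (Metric.ball_mem_nhds k hε)
    (Filter.Eventually.of_forall fun x => (hFcont x).aestronglyMeasurable)
    ((hFcont k).intervalIntegrable _ _)
    (hF'cont k).aestronglyMeasurable
    (ae_of_all _ (by
      intro φ _ x _
      rw [hF'def]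
      simp only [Real.norm_eq_abs]
      calc |4 * Real.cos φ * Real.arcsin (x * Real.cos φ)|
          = 4 * |Real.cos φ| * |Real.arcsin (x * Real.cos φ)| := by
            rw [abs_mul, abs_mul]; norm_num
        _ ≤ 4 * 1 * (π / 2) := by
            apply mul_le_mul (by
              have := Real.abs_cos_le_one φ; linarith) (abs_arcsin_le _)
              (abs_nonneg _) (by norm_num)
        _ ≤ 2 * π + 4 := by linarith))
    (intervalIntegrable_const)
    (ae_of_all _ (by
      intro φ _ x hx
      have h1 : |x * Real.cos φ| < 1 := by
        rw [abs_mul]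
        calc |x| * |Real.cos φ| ≤ |x| * 1 :=
              mul_le_mul_of_nonneg_left (Real.abs_cos_le_one φ) (abs_nonneg x)
          _ = |x| := mul_one _
          _ < 1 := hball x hx
      exact hasDeriv_F (Real.cos φ) x h1))
  have hd := main.2.const_mul ((2 * π)⁻¹ ^ 2)
  have heq : (fun t => frakH t 1) =ᶠ[nhds k]
      (fun t => (2 * π)⁻¹ ^ 2 * ∫ φ in (0:ℝ)..(2*π), F t φ) := by
    filter_upwards [Metric.ball_mem_nhds k hε] with x hx
    exact frakH_left x (hball x hx).le
  have hd2 := HasDerivAt.congr_of_eventuallyEq hd heq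
  have hval : (2 * π)⁻¹ ^ 2 * ∫ φ in (0:ℝ)..(2*π), F' k φ = I₁ k / π ^ 2 := by
    have h1 : (∫ φ in (0:ℝ)..(2*π), F' k φ)
        = 4 * ∫ φ in (0:ℝ)..(2*π), Real.cos φ * Real.arcsin (k * Real.cos φ) := by
      rw [← intervalIntegral.integral_const_mul]
      apply integral_congr
      intro φ _
      rw [hF'def]
      ring
    rw [h1, parts1 k hk0.le hk1]
    field_simp
    ring
  rw [hval] at hd2
  exact hd2

lemma part_two (k : ℝ) (hk0 : 0 < k) (hk1 : k < 1) :
    HasDerivAt (fun t => frakH k t) (I₂ k / π ^ 2) 1 := by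
  have hπ : 0 < π := Real.pi_pos
  set ε : ℝ := (1 - k) / 2 with hεdef
  have hε : 0 < ε := by rw [hεdef]; linarith
  have hball : ∀ x ∈ Metric.ball (1:ℝ) ε, k < x := by
    intro x hx
    rw [Metric.mem_ball, Real.dist_eq] at hx
    have := abs_lt.mp hx
    rw [hεdef] at this
    linarith [this.1]
  have hbk : ∀ φ : ℝ, |k * Real.cos φ| ≤ k := by
    intro φ
    rw [abs_mul, abs_of_pos hk0]
    calc k * |Real.cos φ| ≤ k * 1 :=
          mul_le_mul_of_nonneg_left (Real.abs_cos_le_one φ) hk0.le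
      _ = k := mul_one k
  set G : ℝ → ℝ → ℝ := fun x φ => 4 * Real.sqrt (x ^ 2 - (k * Real.cos φ) ^ 2)
      + 4 * (k * Real.cos φ) * Real.arcsin (k * Real.cos φ / x) with hGdef
  set G' : ℝ → ℝ → ℝ :=
      fun x φ => 4 * Real.sqrt (x ^ 2 - (k * Real.cos φ) ^ 2) / x with hG'def
  have hGcont : ∀ x : ℝ, Continuous (G x) := by
    intro x
    apply Continuous.add
    · exact (continuous_const.mul ((continuous_const.sub
        (((continuous_const.mul Real.continuous_cos).pow 2))).sqrt))
    · exact ((continuous_const.mul (continuous_const.mul Real.continuous_cos)).mul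
        (Real.continuous_arcsin.comp ((continuous_const.mul Real.continuous_cos).div_const x)))
  have hG'cont : ∀ x : ℝ, Continuous (G' x) := by
    intro x
    exact (continuous_const.mul ((continuous_const.sub
      (((continuous_const.mul Real.continuous_cos).pow 2))).sqrt)).div_const x
  have main := intervalIntegral.hasDerivAt_integral_of_dominated_loc_of_deriv_le
    (F := G) (F' := G') (x₀ := 1) (a := 0) (b := 2 * π) (μ := volume)
    (bound := fun _ => 4) (Metric.ball_mem_nhds 1 hε)
    (Filter.Eventually.of_forall fun x => (hGcont x).aestronglyMeasurable)
    ((hGcont 1).intervalIntegrable _ _)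
    (hG'cont 1).aestronglyMeasurable
    (ae_of_all _ (by
      intro φ _ x hx
      have hkx : k < x := hball x hx
      have hx0 : 0 < x := lt_trans hk0 hkx
      rw [hG'def]
      simp only [Real.norm_eq_abs]
      have hnn : 0 ≤ 4 * Real.sqrt (x ^ 2 - (k * Real.cos φ) ^ 2) / x := by positivity
      rw [abs_of_nonneg hnn]
      rw [div_le_iff₀ hx0]
      have hle : Real.sqrt (x ^ 2 - (k * Real.cos φ) ^ 2) ≤ x := by
        calc Real.sqrt (x ^ 2 - (k * Real.cos φ) ^ 2) ≤ Real.sqrt (x ^ 2) :=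
              Real.sqrt_le_sqrt (by nlinarith [sq_nonneg (k * Real.cos φ)])
          _ = x := Real.sqrt_sq hx0.le
      linarith))
    (intervalIntegrable_const)
    (ae_of_all _ (by
      intro φ _ x hx
      have hkx : k < x := hball x hx
      have h1 : |k * Real.cos φ| < x := lt_of_le_of_lt (hbk φ) hkx
      exact hasDeriv_G (k * Real.cos φ) x h1))
  have hd := main.2.const_mul ((2 * π)⁻¹ ^ 2)
  have heq : (fun t => frakH k t) =ᶠ[nhds (1:ℝ)]
      (fun t => (2 * π)⁻¹ ^ 2 * ∫ φ in (0:ℝ)..(2*π), G t φ) := by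
    filter_upwards [Metric.ball_mem_nhds (1:ℝ) hε] with x hx
    exact frakH_right k x hk0.le (hball x hx)
  have hd2 := HasDerivAt.congr_of_eventuallyEq hd heq
  have hval : (2 * π)⁻¹ ^ 2 * ∫ φ in (0:ℝ)..(2*π), G' 1 φ = I₂ k / π ^ 2 := by
    have h1 : (∫ φ in (0:ℝ)..(2*π), G' 1 φ)
        = 4 * ∫ φ in (0:ℝ)..(2*π), Real.sqrt (1 - k ^ 2 * Real.cos φ ^ 2) := by
      rw [← intervalIntegral.integral_const_mul]
      apply integral_congr
      intro φ _
      rw [hG'def]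
      simp only []
      rw [show (1:ℝ) ^ 2 - (k * Real.cos φ) ^ 2 = 1 - k ^ 2 * Real.cos φ ^ 2 by ring]
      rw [div_one]
    rw [h1]
    unfold I₂
    field_simp
    ring
  rw [hval] at hd2
  exact hd2

theorem partials_of_support_function (k : ℝ) (hk0 : 0 < k) (hk1 : k < 1) :
    HasDerivAt (fun t => frakH t 1) (I₁ k / π ^ 2) k ∧
    HasDerivAt (fun t => frakH k t) (I₂ k / π ^ 2) 1 :=
  ⟨part_one k hk0 hk1, part_two k hk0 hk1⟩

end aux2
end

section
/- For N ≥ 1 let 𝔮 be the N×N matrix 𝔮ᵢⱼ = 1/((i+j)(i+j-1)) and 𝔔 = 𝔮⁻¹. Then every entry of 𝔔 is an even integer. -/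
open Matrix Finset Polynomial

namespace QNaux

lemma pascal_step (n : ℕ) (f : ℕ → ℝ) :
    ∑ j ∈ range (n+2), (-1:ℝ)^j * ((n+1).choose j) * f j
      = ∑ j ∈ range (n+1), (-1:ℝ)^j * (n.choose j) * (f j - f (j+1)) := by
  have hsum0 : ∑ j ∈ range (n+2), (-1:ℝ)^j * ((n+1).choose j) * f j
      = f 0 + ∑ j ∈ range (n+1), (-1:ℝ)^(j+1) * ((n+1).choose (j+1)) * f (j+1) := by
    rw [Finset.sum_range_succ' (fun j => (-1:ℝ)^j * ((n+1).choose j) * f j) (n+1)]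
    simp [Nat.choose_zero_right]; ring
  have hT : ∑ j ∈ range (n+1), (-1:ℝ)^(j+1) * (n.choose (j+1)) * f (j+1)
      = (∑ j ∈ range (n+1), (-1:ℝ)^j * (n.choose j) * f j) - f 0 := by
    have h2 : ∑ j ∈ range (n+2), (-1:ℝ)^j * (n.choose j) * f j
        = (∑ j ∈ range (n+1), (-1:ℝ)^(j+1) * (n.choose (j+1)) * f (j+1)) + f 0 := by
      rw [Finset.sum_range_succ' (fun j => (-1:ℝ)^j * (n.choose j) * f j) (n+1)]
      simp [Nat.choose_zero_right]
    have h3 : ∑ j ∈ range (n+2), (-1:ℝ)^j * (n.choose j) * f j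
        = ∑ j ∈ range (n+1), (-1:ℝ)^j * (n.choose j) * f j := by
      rw [Finset.sum_range_succ, Nat.choose_succ_self]
      push_cast; ring
    rw [h3] at h2; linarith
  have hcomb : ∑ j ∈ range (n+1), (-1:ℝ)^j * (n.choose j) * (f j - f (j+1))
      = (∑ j ∈ range (n+1), (-1:ℝ)^j * (n.choose j) * f j)
        + ∑ j ∈ range (n+1), (-1:ℝ)^(j+1) * (n.choose j) * f (j+1) := by
    rw [← Finset.sum_add_distrib]; apply Finset.sum_congr rfl; intros; ring
  have hsplit : ∑ j ∈ range (n+1), (-1:ℝ)^(j+1) * ((n+1).choose (j+1)) * f (j+1)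
      = (∑ j ∈ range (n+1), (-1:ℝ)^(j+1) * (n.choose j) * f (j+1))
        + ∑ j ∈ range (n+1), (-1:ℝ)^(j+1) * (n.choose (j+1)) * f (j+1) := by
    rw [← Finset.sum_add_distrib]; apply Finset.sum_congr rfl; intro j _
    rw [Nat.choose_succ_succ]; push_cast; ring
  rw [hsum0, hsplit, hT, hcomb]; ring

lemma altsum : ∀ (n : ℕ) (p : ℝ[X]), p.natDegree < n →
    ∑ j ∈ range (n+1), (-1:ℝ)^j * (n.choose j) * p.eval (j:ℝ) = 0 := by
  intro n
  induction n with
  | zero => intro p hp; omega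
  | succ n ih =>
    intro p hp
    have hps := pascal_step n (fun j => p.eval (j:ℝ))
    set q : ℝ[X] := p - p.comp (X + C 1) with hq
    have hqeval : ∀ j : ℕ, q.eval (j:ℝ) = p.eval (j:ℝ) - p.eval ((j:ℝ)+1) := by
      intro j; simp [hq, Polynomial.eval_comp]
    have hps2 : ∑ j ∈ range (n+2), (-1:ℝ)^j * ((n+1).choose j) * p.eval (j:ℝ)
        = ∑ j ∈ range (n+1), (-1:ℝ)^j * (n.choose j) * q.eval (j:ℝ) := by
      rw [hps]; apply Finset.sum_congr rfl; intro j _; rw [hqeval j]; push_cast; ring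
    rw [hps2]
    rcases eq_or_ne q 0 with h0 | h0
    · simp [h0]
    · apply ih
      -- show natDegree q < n
      rcases Nat.eq_zero_or_pos p.natDegree with hd0 | hdpos
      · exfalso; apply h0
        have : p = C (p.coeff 0) := Polynomial.eq_C_of_natDegree_eq_zero hd0
        rw [hq, this]; simp
      · have hp0 : p ≠ 0 := fun h => by simp [h] at hdpos
        have hcompdeg : (p.comp (X + C 1)).natDegree = p.natDegree := by
          rw [Polynomial.natDegree_comp, Polynomial.natDegree_X_add_C, mul_one]
        have hlc : p.leadingCoeff = (p.comp (X + C 1)).leadingCoeff := by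
          rw [Polynomial.leadingCoeff_comp (by rw [Polynomial.natDegree_X_add_C]; omega)]
          rw [(Polynomial.monic_X_add_C (1:ℝ)).leadingCoeff, one_pow, mul_one]
        have hcomp0 : p.comp (X + C 1) ≠ 0 := by
          intro h; rw [h] at hcompdeg; simp at hcompdeg; omega
        have hdeq : p.degree = (p.comp (X + C 1)).degree := by
          rw [Polynomial.degree_eq_natDegree hp0, Polynomial.degree_eq_natDegree hcomp0, hcompdeg]
        have := Polynomial.degree_sub_lt hdeq hp0 hlc
        have h2 : q.natDegree < p.natDegree := by
          apply Polynomial.natDegree_lt_natDegree h0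
          rw [Polynomial.degree_eq_natDegree hp0] at this ⊢
          exact this
        omega


lemma Vsum : ∀ (b : ℕ) (i : ℕ), ∑ j ∈ range (b+1), (-1:ℝ)^j * (b.choose j) / ((i:ℝ)+j+1)
    = (i.factorial : ℝ) * b.factorial / (i+b+1).factorial := by
  intro b
  induction b with
  | zero =>
    intro i
    rw [Finset.sum_range_one]
    have h1 : ((i+0+1).factorial : ℝ) = (i+1) * i.factorial := by
      rw [show i+0+1 = i+1 from rfl, Nat.factorial_succ]; push_cast; ring
    rw [h1]
    simp only [pow_zero, Nat.choose_self, Nat.cast_one, one_mul, Nat.factorial_zero,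
      Nat.cast_zero, add_zero, mul_one]
    rw [div_eq_div_iff (by positivity) (by positivity)]
    ring
  | succ b ih =>
    intro i
    have hps := pascal_step b (fun j => 1/((i:ℝ)+j+1))
    have hterm : ∀ j : ℕ, (-1:ℝ)^j * ((b+1).choose j) / ((i:ℝ)+j+1)
        = (-1:ℝ)^j * ((b+1).choose j) * (1/((i:ℝ)+j+1)) := by intro j; ring
    rw [Finset.sum_congr rfl (fun j _ => hterm j), hps]
    have hsplit : ∑ j ∈ range (b+1), (-1:ℝ)^j * (b.choose j) *
          (1/((i:ℝ)+j+1) - 1/((i:ℝ)+((j+1:ℕ):ℝ)+1))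
        = (∑ j ∈ range (b+1), (-1:ℝ)^j * (b.choose j) / ((i:ℝ)+j+1))
          - ∑ j ∈ range (b+1), (-1:ℝ)^j * (b.choose j) / (((i+1:ℕ):ℝ)+j+1) := by
      rw [← Finset.sum_sub_distrib]; apply Finset.sum_congr rfl; intro j _; push_cast; ring
    rw [hsplit, ih i, ih (i+1)]
    have h1 : ((i+(b+1)+1).factorial : ℝ) = (i+b+2) * (i+b+1).factorial := by
      rw [show i+(b+1)+1 = (i+b+1)+1 from by omega, Nat.factorial_succ]; push_cast; ring
    have h2 : (((i+1)+b+1).factorial : ℝ) = (i+b+2) * (i+b+1).factorial := by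
      rw [show (i+1)+b+1 = (i+b+1)+1 from by omega, Nat.factorial_succ]; push_cast; ring
    have h3 : ((i+1).factorial : ℝ) = (i+1) * i.factorial := by
      rw [Nat.factorial_succ]; push_cast; ring
    have h4 : ((b+1).factorial : ℝ) = (b+1) * b.factorial := by
      rw [Nat.factorial_succ]; push_cast; ring
    rw [h1, h2, h3, h4]
    have hne1 : ((i+b+1).factorial : ℝ) ≠ 0 := by positivity
    have hne2 : ((i:ℝ)+b+2) ≠ 0 := by positivity
    field_simp
    ring

lemma prodasc : ∀ (m j : ℕ), ∏ t ∈ range m, ((j:ℝ) + t + 1) = (m.factorial : ℝ) * ((m+j).choose m) := by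
  intro m
  induction m with
  | zero => intro j; simp
  | succ m ih =>
    intro j
    rw [Finset.prod_range_succ, ih j]
    have hnat : (m+j+1) * ((m+j).choose m) = ((m+j+1).choose (m+1)) * (m+1) := by
      simpa [Nat.succ_eq_add_one] using Nat.add_one_mul_choose_eq (m+j) m
    have hcast : ((m+j+1 : ℕ) : ℝ) * ((m+j).choose m) = (((m+j+1).choose (m+1)) : ℝ) * (m+1) := by
      exact_mod_cast congrArg (Nat.cast : ℕ → ℝ) hnat
    have hj : ((j:ℝ) + (m:ℝ) + 1) = ((m+j+1 : ℕ) : ℝ) := by push_cast; ring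
    rw [show m+1+j = m+j+1 from by omega, Nat.factorial_succ, hj]
    push_cast at hcast ⊢
    linear_combination (m.factorial : ℝ) * hcast

lemma prodd : ∀ (m i : ℕ), ∏ t ∈ range m, ((i:ℝ) - t) = (m.factorial : ℝ) * (i.choose m) := by
  intro m
  induction m with
  | zero => intro i; simp
  | succ m ih =>
    intro i
    rw [Finset.prod_range_succ, ih i]
    have hnat : i.choose (m+1) * (m+1) = i.choose m * (i - m) := Nat.choose_succ_right_eq i m
    rcases le_or_gt m i with hle | hlt
    · have hcast : ((i.choose (m+1)) : ℝ) * (m+1) = (i.choose m : ℝ) * ((i:ℝ) - m) := by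
        calc ((i.choose (m+1)) : ℝ) * (m+1) = ((i.choose (m+1) * (m+1) : ℕ) : ℝ) := by push_cast; ring
          _ = ((i.choose m * (i - m) : ℕ) : ℝ) := by rw [hnat]
          _ = (i.choose m : ℝ) * ((i:ℝ) - m) := by push_cast [Nat.cast_sub hle]; ring
      rw [Nat.factorial_succ]
      push_cast at hcast ⊢
      linear_combination (-(m.factorial : ℝ)) * hcast
    · have h2 : i.choose (m+1) = 0 := Nat.choose_eq_zero_of_lt (by omega)
      have h1 : i.choose m = 0 ∨ (i:ℝ) - m = 0 := by
        rcases Nat.lt_or_ge i m with h | h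
        · left; exact Nat.choose_eq_zero_of_lt h
        · right; rw [show i = m from by omega]; ring
      rcases h1 with h | h <;> simp [h, h2]


/-- integer coefficients of `(1-x) pₘ(x)` -/
def g (m k : ℕ) : ℤ := (-1)^(m+k) * (m+1).choose k * ((m+k).choose m)

/-- integer coefficients of the shifted Jacobi polynomial `pₘ(x)` -/
def a (m k : ℕ) : ℤ := ∑ t ∈ range (k+1), g m t

noncomputable def Rp (m : ℕ) : ℝ[X] :=
  Polynomial.C ((m.factorial : ℝ)⁻¹) * ∏ t ∈ range m, (X + Polynomial.C ((t:ℝ)+1))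

lemma Rp_natDegree (m : ℕ) : (Rp m).natDegree ≤ m := by
  unfold Rp
  apply le_trans (Polynomial.natDegree_mul_le)
  have h1 : (Polynomial.C ((m.factorial : ℝ)⁻¹)).natDegree = 0 := Polynomial.natDegree_C _
  have h2 : (∏ t ∈ range m, (X + Polynomial.C ((t:ℝ)+1))).natDegree ≤ m := by
    apply le_trans (Polynomial.natDegree_prod_le _ _)
    apply le_trans (Finset.sum_le_sum (fun t _ => le_of_eq (Polynomial.natDegree_X_add_C _)))
    simp
  omega

lemma Rp_eval_nat (m j : ℕ) : (Rp m).eval (j:ℝ) = ((m+j).choose m : ℝ) := by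
  unfold Rp
  rw [Polynomial.eval_mul, Polynomial.eval_C, Polynomial.eval_prod]
  simp only [Polynomial.eval_add, Polynomial.eval_X, Polynomial.eval_C]
  have hre : ∀ x ∈ range m, (j:ℝ) + ((x:ℝ)+1) = (j:ℝ) + x + 1 := fun x _ => by ring
  rw [Finset.prod_congr rfl hre, prodasc m j]
  have : (m.factorial : ℝ) ≠ 0 := by positivity
  field_simp

lemma Rp_eval_neg (m i : ℕ) : (Rp m).eval (-(i:ℝ)-1) = (-1:ℝ)^m * (i.choose m : ℝ) := by
  unfold Rp
  rw [Polynomial.eval_mul, Polynomial.eval_C, Polynomial.eval_prod]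
  simp only [Polynomial.eval_add, Polynomial.eval_X, Polynomial.eval_C]
  have hterm : ∀ t ∈ range m, (-(i:ℝ)-1 + ((t:ℝ)+1)) = -((i:ℝ) - t) := by
    intro t _; ring
  have hterm2 : ∀ t ∈ range m, (-(i:ℝ)-1 + ((t:ℝ)+1)) = (-1) * ((i:ℝ) - t) := by
    intro t _; ring
  rw [Finset.prod_congr rfl hterm2, Finset.prod_mul_distrib, Finset.prod_const, Finset.card_range,
    prodd m i]
  have : (m.factorial : ℝ) ≠ 0 := by positivity
  field_simp




lemma gsum_zero (m : ℕ) : ∑ t ∈ range (m+2), (g m t : ℝ) = 0 := by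
  have h := altsum (m+1) (Rp m) (by have := Rp_natDegree m; omega)
  have h2 : ∑ j ∈ range (m+2), (-1:ℝ)^j * ((m+1).choose j) * ((m+j).choose m : ℝ) = 0 := by
    rw [← h]; apply Finset.sum_congr rfl; intro j _; rw [Rp_eval_nat]
  calc ∑ t ∈ range (m+2), (g m t : ℝ)
      = (-1:ℝ)^m * ∑ j ∈ range (m+2), (-1:ℝ)^j * ((m+1).choose j) * ((m+j).choose m : ℝ) := by
        rw [Finset.mul_sum]; apply Finset.sum_congr rfl; intro j _
        unfold g; push_cast; rw [pow_add]; ring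
    _ = 0 := by rw [h2]; ring

lemma a_eq_zero {m k : ℕ} (h : m + 1 ≤ k) : a m k = 0 := by
  have hz : (a m k : ℝ) = 0 := by
    unfold a
    push_cast
    rw [← gsum_zero m]
    symm
    apply Finset.sum_subset
    · intro t ht; simp only [Finset.mem_range] at *; omega
    · intro t _ ht2
      simp only [Finset.mem_range, not_lt] at ht2
      unfold g
      have : (m+1).choose t = 0 := Nat.choose_eq_zero_of_lt (by omega)
      rw [this]; push_cast; ring
  exact_mod_cast hz

lemma a_diag (m : ℕ) : a m m = (2*m+1).choose m := by
  have h1 : a m (m+1) = 0 := a_eq_zero (le_refl _)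
  have h2 : a m (m+1) = a m m + g m (m+1) := by
    unfold a; rw [Finset.sum_range_succ]
  have h3 : g m (m+1) = -((2*m+1).choose m) := by
    unfold g
    rw [Nat.choose_self]
    have : (-1:ℤ)^(m+(m+1)) = -1 := by
      rw [show m+(m+1) = 2*m+1 from by omega]
      rw [pow_succ, pow_mul]
      simp
    rw [this, show m+(m+1) = 2*m+1 from by omega]
    ring
  omega

/-- The main single-sum identity. -/
lemma Psum (m i : ℕ) :
    ∑ j ∈ range (m+2), (g m j : ℝ) / ((i:ℝ)+j+1)
      = (i.choose m : ℝ) * i.factorial * (m+1).factorial / ((i+m+2).factorial) := by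
  set c : ℝ := (-1:ℝ)^m * (i.choose m : ℝ) with hc
  have hroot : (X - Polynomial.C (-(i:ℝ)-1)) ∣ (Rp m - Polynomial.C c) := by
    rw [Polynomial.dvd_iff_isRoot]
    simp [Polynomial.IsRoot, Rp_eval_neg, hc]
  obtain ⟨h, hh⟩ := hroot
  have hdeg : h.natDegree < m + 1 := by
    rcases eq_or_ne h 0 with h0 | h0
    · rw [h0]; simp
    · have hX : (X - Polynomial.C (-(i:ℝ)-1)) ≠ 0 := Polynomial.X_sub_C_ne_zero _
      have hmul : (Rp m - Polynomial.C c).natDegree = 1 + h.natDegree := by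
        rw [hh, Polynomial.natDegree_mul hX h0, Polynomial.natDegree_X_sub_C]
      have hsub : (Rp m - Polynomial.C c).natDegree ≤ m := by
        apply le_trans (Polynomial.natDegree_sub_le _ _)
        have := Rp_natDegree m
        simp only [Polynomial.natDegree_C]
        omega
      omega
  have hzero := altsum (m+1) h hdeg
  have heval : ∀ j : ℕ, ((m+j).choose m : ℝ) = ((j:ℝ)+(i:ℝ)+1) * h.eval (j:ℝ) + c := by
    intro j
    have := congrArg (Polynomial.eval (j:ℝ)) hh
    simp only [Polynomial.eval_sub, Polynomial.eval_mul, Polynomial.eval_X, Polynomial.eval_C,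
      Rp_eval_nat] at this
    linarith [this]
  have hV := Vsum (m+1) i
  -- rewrite each term
  have hne : ∀ j : ℕ, ((i:ℝ)+j+1) ≠ 0 := by intro j; positivity
  have hterm : ∀ j ∈ range (m+2), (g m j : ℝ) / ((i:ℝ)+j+1)
      = (-1:ℝ)^m * ((-1:ℝ)^j * ((m+1).choose j) * h.eval (j:ℝ))
        + c * ((-1:ℝ)^m * ((-1:ℝ)^j * ((m+1).choose j) / ((i:ℝ)+j+1))) := by
    intro j _
    unfold g
    push_cast
    rw [heval j]
    field_simp
    rw [pow_add]
    ring
  rw [Finset.sum_congr rfl hterm, Finset.sum_add_distrib]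
  have e1 : ∑ j ∈ range (m+2), (-1:ℝ)^m * ((-1:ℝ)^j * ((m+1).choose j) * h.eval (j:ℝ)) = 0 := by
    rw [← Finset.mul_sum, hzero, mul_zero]
  have hV' : ∑ j ∈ range (m+2), (-1:ℝ)^j * ((m+1).choose j) / ((i:ℝ)+j+1)
      = (i.factorial : ℝ) * (m+1).factorial / ((i+(m+1)+1).factorial) := hV
  have e2 : ∑ j ∈ range (m+2), c * ((-1:ℝ)^m * ((-1:ℝ)^j * ((m+1).choose j) / ((i:ℝ)+j+1)))
      = c * (-1:ℝ)^m * ((i.factorial : ℝ) * (m+1).factorial / (i+(m+1)+1).factorial) := by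
    rw [← Finset.mul_sum, ← Finset.mul_sum, hV', hc]; ring
  rw [e1, e2, zero_add, hc]
  have hsq : (-1:ℝ)^m * (i.choose m : ℝ) * (-1:ℝ)^m = (i.choose m : ℝ) := by
    rw [mul_comm ((-1:ℝ)^m) _, mul_assoc, ← pow_add]
    simp [pow_add, ← two_mul, pow_mul]
  rw [hsq, show i+(m+1)+1 = i+m+2 from by omega]
  ring


lemma abel (m : ℕ) (x : ℕ → ℝ) : ∀ K : ℕ,
    ∑ j ∈ range (K+1), (a m j : ℝ) * (x j - x (j+1))
      = (∑ j ∈ range (K+1), (g m j : ℝ) * x j) - (a m K : ℝ) * x (K+1) := by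
  intro K
  induction K with
  | zero =>
    rw [Finset.sum_range_one, Finset.sum_range_one]
    have : a m 0 = g m 0 := by unfold a; rw [Finset.sum_range_one]
    rw [this]; ring
  | succ K ih =>
    rw [Finset.sum_range_succ, ih]
    have hg : ∑ j ∈ range (K+1+1), (g m j : ℝ) * x j
        = (∑ j ∈ range (K+1), (g m j:ℝ) * x j) + (g m (K+1):ℝ) * x (K+1) :=
      Finset.sum_range_succ _ _
    have hrec : (a m (K+1) : ℝ) = (a m K : ℝ) + (g m (K+1) : ℝ) := by
      have : a m (K+1) = a m K + g m (K+1) := by unfold a; rw [Finset.sum_range_succ]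
      exact_mod_cast congrArg (Int.cast : ℤ → ℝ) this
    rw [hg, hrec]; ring

lemma trunc_sum (m : ℕ) (f : ℕ → ℝ) {K : ℕ} (hK : m + 1 ≤ K) :
    ∑ j ∈ range K, (a m j : ℝ) * f j = ∑ j ∈ range (m+1), (a m j : ℝ) * f j := by
  symm
  apply Finset.sum_subset
  · intro t ht; simp only [Finset.mem_range] at *; omega
  · intro t _ ht2
    simp only [Finset.mem_range, not_lt] at ht2
    rw [a_eq_zero (by omega)]; simp

lemma keyS (m i N : ℕ) (hm : m < N) :
    ∑ j ∈ range N, (a m j : ℝ) * (1/((((i:ℝ))+j+2) * (((i:ℝ))+j+1)))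
      = (i.choose m : ℝ) * i.factorial * (m+1).factorial / ((i+m+2).factorial) := by
  set x : ℕ → ℝ := fun j => ((i:ℝ)+j+1)⁻¹ with hx
  have hsplit : ∀ j : ℕ, (1:ℝ)/((((i:ℝ))+j+2) * (((i:ℝ))+j+1)) = x j - x (j+1) := by
    intro j
    simp only [hx]
    push_cast
    have h1 : ((i:ℝ)+j+1) ≠ 0 := by positivity
    have h2 : ((i:ℝ)+j+2) ≠ 0 := by positivity
    field_simp
    ring
  have hre : ∀ j ∈ range N, (a m j : ℝ) * (1/((((i:ℝ))+j+2) * (((i:ℝ))+j+1)))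
      = (a m j : ℝ) * (x j - x (j+1)) := fun j _ => by rw [hsplit j]
  rw [Finset.sum_congr rfl hre, trunc_sum m _ (by omega : m+1 ≤ N),
    ← trunc_sum m _ (by omega : m+1 ≤ m+2)]
  rw [abel m x (m+1)]
  have hz : (a m (m+1) : ℝ) = 0 := by rw [a_eq_zero (le_refl _)]; simp
  rw [hz]
  have : ∑ j ∈ range (m+2), (g m j : ℝ) * x j = ∑ j ∈ range (m+2), (g m j : ℝ) / ((i:ℝ)+j+1) := by
    apply Finset.sum_congr rfl; intro j _; rw [hx]; rw [div_eq_mul_inv]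
  rw [this, Psum]; ring


variable (N : ℕ)

noncomputable def qmat : Matrix (Fin N) (Fin N) ℝ :=
  Matrix.of fun i j : Fin N => (1 / (((i:ℕ) + (j:ℕ) + 2) * ((i:ℕ) + (j:ℕ) + 1) : ℝ))

noncomputable def Amat : Matrix (Fin N) (Fin N) ℝ :=
  Matrix.of fun n k : Fin N => ((a (n:ℕ) (k:ℕ) : ℤ) : ℝ)

lemma hinner (n i0 : Fin N) : (Amat N * qmat N) n i0
    = ((i0:ℕ).choose (n:ℕ) : ℝ) * (i0:ℕ).factorial * ((n:ℕ)+1).factorial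
        / (((i0:ℕ)+(n:ℕ)+2).factorial) := by
  rw [Matrix.mul_apply]
  have hcongr : ∀ j : Fin N, Amat N n j * qmat N j i0
      = (fun jn : ℕ => (a (n:ℕ) jn : ℝ)
          * (1/(((((i0:ℕ)):ℝ)+jn+2) * ((((i0:ℕ)):ℝ)+jn+1)))) (j:ℕ) := by
    intro j
    simp only [Amat, qmat, Matrix.of_apply]
    push_cast
    ring
  rw [Finset.sum_congr rfl (fun j _ => hcongr j)]
  exact (Fin.sum_univ_eq_sum_range _ N).trans (keyS (n:ℕ) (i0:ℕ) N n.isLt)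

lemma htri (n m' : Fin N) (hle : (m':ℕ) ≤ (n:ℕ)) :
    (Amat N * qmat N * (Amat N)ᵀ) n m'
      = if n = m' then (2*((n:ℕ)+1) : ℝ)⁻¹ else 0 := by
  rw [Matrix.mul_apply]
  rw [Finset.sum_eq_single_of_mem n (Finset.mem_univ n) ?side]
  case side =>
    intro i0 _ hne
    rcases lt_or_gt_of_ne (show (i0:ℕ) ≠ (n:ℕ) from fun h => hne (Fin.ext h)) with h | h
    · rw [hinner, Nat.choose_eq_zero_of_lt h]; simp
    · have hz : a (m':ℕ) (i0:ℕ) = 0 := a_eq_zero (by omega)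
      simp [Matrix.transpose_apply, Amat, hz]
  rw [hinner]
  have htr : (Amat N)ᵀ n m' = ((a (m':ℕ) (n:ℕ) : ℤ) : ℝ) := rfl
  rw [htr]
  rcases eq_or_ne n m' with he | he
  · rw [if_pos he, ← he]
    rw [Nat.choose_self, a_diag]
    set nn := (n:ℕ)
    have hfact : (2*nn+1).choose nn * nn.factorial * (nn+1).factorial = (2*nn+1).factorial := by
      have h1 := Nat.choose_mul_factorial_mul_factorial (show nn ≤ 2*nn+1 by omega)
      rw [show 2*nn+1-nn = nn+1 from by omega] at h1
      exact h1
    have hcast : ((2*nn+1).choose nn : ℝ) * nn.factorial * (nn+1).factorial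
        = ((2*nn+1).factorial : ℝ) := by exact_mod_cast congrArg (Nat.cast : ℕ → ℝ) hfact
    have hC : ((2*nn+1).choose nn : ℝ)
        = ((2*nn+1).factorial : ℝ) / ((nn.factorial : ℝ) * ((nn+1).factorial : ℝ)) := by
      rw [eq_div_iff (by positivity)]
      linear_combination hcast
    push_cast
    rw [show nn+nn+2 = (2*nn+1)+1 from by omega,
      show ((2*nn+1)+1).factorial = ((2*nn+1)+1) * (2*nn+1).factorial from Nat.factorial_succ _,
      hC]
    have hne1 : ((2*nn+1).factorial : ℝ) ≠ 0 := by positivity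
    have hne2 : ((2*nn+1+1 : ℕ) : ℝ) ≠ 0 := by positivity
    have hne4 : ((nn.factorial : ℝ)) ≠ 0 := by positivity
    have hne5 : (((nn+1).factorial : ℝ)) ≠ 0 := by positivity
    push_cast
    field_simp
    ring
  · rw [if_neg he]
    have hlt : (m':ℕ) < (n:ℕ) := lt_of_le_of_ne hle (fun h => he (Fin.ext h.symm))
    have hz : a (m':ℕ) (n:ℕ) = 0 := a_eq_zero (by omega)
    rw [hz]
    simp

lemma M_eq : Amat N * qmat N * (Amat N)ᵀ
    = Matrix.diagonal (fun n : Fin N => (2*((n:ℕ)+1) : ℝ)⁻¹) := by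
  have hqsym : (qmat N)ᵀ = qmat N := by
    ext i j
    simp only [qmat, Matrix.transpose_apply, Matrix.of_apply]
    ring_nf
  have hsym : (Amat N * qmat N * (Amat N)ᵀ)ᵀ = Amat N * qmat N * (Amat N)ᵀ := by
    rw [Matrix.transpose_mul, Matrix.transpose_mul, Matrix.transpose_transpose, hqsym,
      ← Matrix.mul_assoc]
  ext n m'
  rcases le_or_gt (m':ℕ) (n:ℕ) with h | h
  · rw [htri N n m' h, Matrix.diagonal_apply]
  · have h1 : (Amat N * qmat N * (Amat N)ᵀ) n m'
        = (Amat N * qmat N * (Amat N)ᵀ) m' n := by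
      conv_lhs => rw [← hsym]
      rw [Matrix.transpose_apply]
    rw [h1, htri N m' n (le_of_lt h), Matrix.diagonal_apply]
    have hne : m' ≠ n := fun hEq => by rw [hEq] at h; omega
    have hne' : n ≠ m' := fun hEq => hne hEq.symm
    rw [if_neg hne, if_neg hne']

theorem QN_even_integer' (i j : Fin N) :
    ∃ m : ℤ, (qmat N)⁻¹ i j = 2 * m := by
  have hAtri : (Amat N).BlockTriangular OrderDual.toDual := by
    intro r s hrs
    have : (r:ℕ) < (s:ℕ) := hrs
    simp only [Amat, Matrix.of_apply]
    rw [a_eq_zero (by omega)]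
    simp
  have hdet : (Amat N).det ≠ 0 := by
    rw [Matrix.det_of_lowerTriangular (Amat N) hAtri]
    apply Finset.prod_ne_zero_iff.mpr
    intro n _
    simp only [Amat, Matrix.of_apply]
    rw [a_diag]
    have := Nat.choose_pos (show (n:ℕ) ≤ 2*(n:ℕ)+1 by omega)
    exact_mod_cast Nat.cast_ne_zero.mpr (by omega)
  haveI : Invertible (Amat N) := (Amat N).invertibleOfIsUnitDet (isUnit_iff_ne_zero.mpr hdet)
  haveI : Invertible (Amat N)ᵀ := Matrix.invertibleTranspose (Amat N)
  set D' : Matrix (Fin N) (Fin N) ℝ :=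
    Matrix.diagonal (fun n : Fin N => (2*((n:ℕ)+1) : ℝ)) with hD'
  have hDD : Matrix.diagonal (fun n : Fin N => (2*((n:ℕ)+1) : ℝ)⁻¹) * D' = 1 := by
    rw [hD', Matrix.diagonal_mul_diagonal]
    have : (fun n : Fin N => (2*((n:ℕ)+1) : ℝ)⁻¹ * (2*((n:ℕ)+1) : ℝ)) = fun _ => (1:ℝ) := by
      funext n
      exact inv_mul_cancel₀ (by positivity)
    rw [this, Matrix.diagonal_one]
  have hq_eq : qmat N = ⅟(Amat N) * Matrix.diagonal (fun n : Fin N => (2*((n:ℕ)+1) : ℝ)⁻¹)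
      * ⅟((Amat N)ᵀ) := by
    have h0 : ⅟(Amat N) * (Amat N * qmat N * (Amat N)ᵀ) * ⅟((Amat N)ᵀ) = qmat N := by
      rw [Matrix.mul_assoc (Amat N) (qmat N) ((Amat N)ᵀ), invOf_mul_cancel_left,
        mul_invOf_cancel_right]
    rw [← h0, M_eq]
  have hright : qmat N * ((Amat N)ᵀ * D' * Amat N) = 1 := by
    rw [hq_eq]
    simp only [Matrix.mul_assoc]
    rw [invOf_mul_cancel_left]
    rw [← Matrix.mul_assoc (Matrix.diagonal _) D' (Amat N), hDD, Matrix.one_mul, invOf_mul_self]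
  have hfin : (qmat N)⁻¹ = (Amat N)ᵀ * D' * Amat N := Matrix.inv_eq_right_inv hright
  refine ⟨∑ n : Fin N, (((n:ℕ):ℤ)+1) * a (n:ℕ) (i:ℕ) * a (n:ℕ) (j:ℕ), ?_⟩
  rw [hfin]
  rw [Matrix.mul_apply]
  have hterm : ∀ n : Fin N, ((Amat N)ᵀ * D') i n * Amat N n j
      = (a (n:ℕ) (i:ℕ) : ℝ) * (2*((n:ℕ)+1)) * (a (n:ℕ) (j:ℕ) : ℝ) := by
    intro n
    rw [hD', Matrix.mul_diagonal]
    simp only [Matrix.transpose_apply, Amat, Matrix.of_apply]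
  rw [Finset.sum_congr rfl (fun n _ => hterm n)]
  push_cast
  rw [Finset.mul_sum]
  apply Finset.sum_congr rfl
  intro n _
  ring


end QNaux

theorem QN_even_integer (N : ℕ) (hN : 1 ≤ N) (i j : Fin N) :
    ∃ m : ℤ,
      (Matrix.of fun i j : Fin N =>
        (1 / (((i:ℕ) + (j:ℕ) + 2) * ((i:ℕ) + (j:ℕ) + 1) : ℝ)))⁻¹ i j = 2 * m := by
  exact QNaux.QN_even_integer' N i j
end

section
/- Consider the single oscillator system ẋ = y, ẏ = -x + u with the quadratic condition equation (17'): 6T⁻²y² - 24T⁻³xy + 36T⁻⁴x² = 1/6. For each (x,y) ≠ (0,0), there exists a unique T > 0 satisfying this equation. -/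
private lemma g_mono (x y a b : ℝ) (hxy : x ≠ 0 ∨ y ≠ 0) (ha : 0 < a) (hab : a < b) :
    6 * a ^ 2 * y ^ 2 - 24 * a ^ 3 * x * y + 36 * a ^ 4 * x ^ 2
      < 6 * b ^ 2 * y ^ 2 - 24 * b ^ 3 * x * y + 36 * b ^ 4 * x ^ 2 := by
  have hb : 0 < b := ha.trans hab
  have hba : 0 < b - a := by linarith
  have hkey : 0 < y ^ 2 * (a + b) - 4 * x * y * (a^2 + a*b + b^2)
      + 6 * x ^ 2 * (a + b) * (a^2 + b^2) := by
    have habpos : 0 < a + b := by linarith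
    have hid : (a + b) * (y ^ 2 * (a + b) - 4 * x * y * (a^2 + a*b + b^2)
        + 6 * x ^ 2 * (a + b) * (a^2 + b^2))
        = (y*(a+b) - 2*x*(a^2+a*b+b^2))^2
          + 2*x^2*(a^4 + 2*a^3*b + 2*a*b^3 + b^4) := by ring
    have hsum : 0 < (a + b) * (y ^ 2 * (a + b) - 4 * x * y * (a^2 + a*b + b^2)
        + 6 * x ^ 2 * (a + b) * (a^2 + b^2)) := by
      rw [hid]
      rcases hxy with hx | hy
      · have : 0 < 2*x^2*(a^4 + 2*a^3*b + 2*a*b^3 + b^4) := by positivity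
        nlinarith [sq_nonneg (y*(a+b) - 2*x*(a^2+a*b+b^2))]
      · rcases eq_or_ne x 0 with hx | hx
        · subst hx
          have : 0 < (y*(a+b))^2 := by positivity
          nlinarith
        · have : 0 < 2*x^2*(a^4 + 2*a^3*b + 2*a*b^3 + b^4) := by positivity
          nlinarith [sq_nonneg (y*(a+b) - 2*x*(a^2+a*b+b^2))]
    by_contra hle
    push_neg at hle
    nlinarith [mul_nonpos_of_nonneg_of_nonpos habpos.le hle]
  nlinarith [mul_pos hba hkey, mul_pos ha hb, sq_nonneg (a+b)]

theorem unique_time_single_oscillator (x y : ℝ) (h : (x, y) ≠ (0, 0)) :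
    ∃! T : ℝ, 0 < T ∧
      6 * T⁻¹ ^ 2 * y ^ 2 - 24 * T⁻¹ ^ 3 * x * y + 36 * T⁻¹ ^ 4 * x ^ 2 = 1 / 6 := by
  have hxy : x ≠ 0 ∨ y ≠ 0 := by
    by_contra hc
    push_neg at hc
    exact h (by simp [hc.1, hc.2])
  have hr : 0 < x ^ 2 + y ^ 2 := by
    rcases hxy with hx | hy <;> positivity
  set g : ℝ → ℝ := fun u => 6 * u ^ 2 * y ^ 2 - 24 * u ^ 3 * x * y + 36 * u ^ 4 * x ^ 2 with hg
  have hgc : Continuous g := by fun_prop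
  set M : ℝ := max 1 (1 / Real.sqrt (x ^ 2 + y ^ 2)) with hM
  have hM1 : 1 ≤ M := le_max_left _ _
  have hsr : 0 < Real.sqrt (x ^ 2 + y ^ 2) := Real.sqrt_pos.mpr hr
  have hMr : 1 ≤ M ^ 2 * (x ^ 2 + y ^ 2) := by
    have h1 : 1 / Real.sqrt (x ^ 2 + y ^ 2) ≤ M := le_max_right _ _
    have h2 : 1 ≤ M * Real.sqrt (x ^ 2 + y ^ 2) := by
      rw [div_le_iff₀ hsr] at h1; linarith
    have h3 : Real.sqrt (x ^ 2 + y ^ 2) ^ 2 = x ^ 2 + y ^ 2 := Real.sq_sqrt hr.le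
    nlinarith [mul_pos hsr (lt_of_lt_of_le one_pos hM1)]
  have hgM : 1 / 6 ≤ g M := by
    have hMpos : (0:ℝ) < M := lt_of_lt_of_le one_pos hM1
    have hM2 : 1 ≤ M ^ 2 := by nlinarith
    simp only [hg]
    nlinarith [sq_nonneg (5*y - 12*x*M), sq_nonneg (x*M), sq_nonneg y,
      mul_le_mul_of_nonneg_left hM2 (sq_nonneg (x*M))]
  have hg0 : g 0 = 0 := by simp [hg]
  have hibt : (1/6 : ℝ) ∈ Set.Icc (g 0) (g M) := ⟨by rw [hg0]; norm_num, hgM⟩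
  obtain ⟨u, huIcc, hu⟩ := intermediate_value_Icc (le_of_lt (lt_of_lt_of_le one_pos hM1))
    hgc.continuousOn hibt
  have hupos : 0 < u := by
    rcases lt_or_eq_of_le huIcc.1 with h' | h'
    · exact h'
    · exfalso; rw [← h', hg0] at hu; norm_num at hu
  refine ⟨u⁻¹, ⟨by positivity, by simpa [inv_inv] using hu⟩, ?_⟩
  rintro T ⟨hT, hTeq⟩
  have hTinv : 0 < T⁻¹ := by positivity
  have heq : g T⁻¹ = g u := by rw [hu]; exact hTeq
  have : T⁻¹ = u := by
    rcases lt_trichotomy T⁻¹ u with h' | h' | h'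
    · exact absurd heq (ne_of_lt (g_mono x y _ _ hxy hTinv h'))
    · exact h'
    · exact absurd heq.symm (ne_of_lt (g_mono x y _ _ hxy hupos h'))
  rw [← this, inv_inv]
end

section
/- Let A be the 2N×2N block-diagonal matrix with blocks [[0,1],[-ωᵢ²,0]] and B = (0,1,0,1,…,0,1)ᵀ. If the frequencies ω₁,…,ω_N are positive and pairwise distinct, then the pair (A,B) satisfies the Kalman controllability condition: the vectors B, AB, A²B, …, A^{2N-1}B span ℝ^{2N}. -/
open Matrix

/-- Block-diagonal system matrix with 2×2 blocks [[0,1],[-ωᵢ²,0]]. -/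
noncomputable def oscMatrix (N : ℕ) (ω : Fin N → ℝ) :
    Matrix (Fin (2 * N)) (Fin (2 * N)) ℝ :=
  Matrix.of fun i j =>
    if (i : ℕ) % 2 = 0 then
      (if (j : ℕ) = (i : ℕ) + 1 then 1 else 0)
    else
      (if (j : ℕ) + 1 = (i : ℕ) then -(ω ⟨(i : ℕ) / 2, by omega⟩) ^ 2 else 0)

/-- Control vector B = (0,1,0,1,…,0,1)ᵀ. -/
def oscB (N : ℕ) : Fin (2 * N) → ℝ :=
  fun i => if (i : ℕ) % 2 = 1 then 1 else 0

/-- Vector equal to A^{2j} B : supported on odd indices. -/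
noncomputable def vE (N : ℕ) (ω : Fin N → ℝ) (j : ℕ) : Fin (2 * N) → ℝ :=
  fun i => if (i : ℕ) % 2 = 1 then (-(ω ⟨(i : ℕ) / 2, by omega⟩) ^ 2) ^ j else 0

/-- Vector equal to A^{2j+1} B : supported on even indices. -/
noncomputable def vO (N : ℕ) (ω : Fin N → ℝ) (j : ℕ) : Fin (2 * N) → ℝ :=
  fun i => if (i : ℕ) % 2 = 0 then (-(ω ⟨(i : ℕ) / 2, by omega⟩) ^ 2) ^ j else 0

lemma mulVec_osc_even {N : ℕ} (ω : Fin N → ℝ) (v : Fin (2 * N) → ℝ)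
    (i : Fin (2 * N)) (h : (i : ℕ) % 2 = 0) :
    (oscMatrix N ω).mulVec v i = v ⟨(i : ℕ) + 1, by omega⟩ := by
  unfold oscMatrix mulVec dotProduct
  rw [Finset.sum_eq_single (⟨(i : ℕ) + 1, by omega⟩ : Fin (2 * N))]
  · simp [h]
  · intro b _ hb
    have hb' : (b : ℕ) ≠ (i : ℕ) + 1 := fun hh => hb (Fin.ext hh)
    simp [h, hb']
  · intro hmem; exact absurd (Finset.mem_univ _) hmem

lemma mulVec_osc_odd {N : ℕ} (ω : Fin N → ℝ) (v : Fin (2 * N) → ℝ)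
    (i : Fin (2 * N)) (h : (i : ℕ) % 2 = 1) :
    (oscMatrix N ω).mulVec v i
      = -(ω ⟨(i : ℕ) / 2, by omega⟩) ^ 2 * v ⟨(i : ℕ) - 1, by omega⟩ := by
  have h0 : (i : ℕ) % 2 ≠ 0 := by omega
  unfold oscMatrix mulVec dotProduct
  rw [Finset.sum_eq_single (⟨(i : ℕ) - 1, by omega⟩ : Fin (2 * N))]
  · have hcond : ((⟨(i : ℕ) - 1, by omega⟩ : Fin (2 * N)) : ℕ) + 1 = (i : ℕ) := by
      show (i : ℕ) - 1 + 1 = (i : ℕ); omega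
    simp only [of_apply]
    rw [if_neg h0, if_pos hcond]
  · intro b _ hb
    have hb' : (b : ℕ) + 1 ≠ (i : ℕ) := by
      intro hh
      exact hb (Fin.ext (show (b : ℕ) = (i : ℕ) - 1 by omega))
    simp [h0, hb']
  · intro hmem; exact absurd (Finset.mem_univ _) hmem

lemma step_EO {N : ℕ} (ω : Fin N → ℝ) (j : ℕ) :
    (oscMatrix N ω).mulVec (vE N ω j) = vO N ω j := by
  funext i
  by_cases h : (i : ℕ) % 2 = 0
  · rw [mulVec_osc_even ω _ i h]
    have h1 : ((i : ℕ) + 1) % 2 = 1 := by omega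
    have h2 : ((i : ℕ) + 1) / 2 = (i : ℕ) / 2 := by omega
    simp only [vE, vO, h1, if_true, h, if_pos h]
    have h4 : (⟨((i : ℕ) + 1) / 2, by omega⟩ : Fin N) = ⟨(i : ℕ) / 2, by omega⟩ :=
      Fin.ext h2
    rw [h4]
  · have h1 : (i : ℕ) % 2 = 1 := by omega
    rw [mulVec_osc_odd ω _ i h1]
    have h2 : ((i : ℕ) - 1) % 2 = 0 := by omega
    have h3 : ((i : ℕ) - 1) % 2 ≠ 1 := by omega
    simp [vE, vO, h3, h]

lemma step_OE {N : ℕ} (ω : Fin N → ℝ) (j : ℕ) :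
    (oscMatrix N ω).mulVec (vO N ω j) = vE N ω (j + 1) := by
  funext i
  by_cases h : (i : ℕ) % 2 = 0
  · rw [mulVec_osc_even ω _ i h]
    have h1 : ((i : ℕ) + 1) % 2 ≠ 0 := by omega
    have h2 : (i : ℕ) % 2 ≠ 1 := by omega
    simp [vE, vO, h1, h2]
  · have h1 : (i : ℕ) % 2 = 1 := by omega
    rw [mulVec_osc_odd ω _ i h1]
    have h2 : ((i : ℕ) - 1) % 2 = 0 := by omega
    have h3 : ((i : ℕ) - 1) / 2 = (i : ℕ) / 2 := by omega
    simp only [vE, vO, h2, if_true, h1, if_pos h2, if_pos h1]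
    have h4 : (⟨((i : ℕ) - 1) / 2, by omega⟩ : Fin N) = ⟨(i : ℕ) / 2, by omega⟩ := by
      exact Fin.ext h3
    rw [h4, pow_succ]
    ring

lemma pow_mulVec_even {N : ℕ} (ω : Fin N → ℝ) (j : ℕ) :
    ((oscMatrix N ω) ^ (2 * j)).mulVec (oscB N) = vE N ω j := by
  induction j with
  | zero =>
    funext i
    simp only [Nat.mul_zero, pow_zero, one_mulVec, oscB, vE, pow_zero]
  | succ j ih =>
    have : 2 * (j + 1) = (2 * j + 1) + 1 := by ring
    rw [this, pow_succ', ← mulVec_mulVec, pow_succ', ← mulVec_mulVec, ih, step_EO, step_OE]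

lemma pow_mulVec_odd {N : ℕ} (ω : Fin N → ℝ) (j : ℕ) :
    ((oscMatrix N ω) ^ (2 * j + 1)).mulVec (oscB N) = vO N ω j := by
  rw [pow_succ', ← mulVec_mulVec, pow_mulVec_even, step_EO]

theorem kalman_controllability (N : ℕ) (hN : 1 ≤ N) (ω : Fin N → ℝ)
    (hpos : ∀ i, 0 < ω i) (hdist : Function.Injective ω) :
    Submodule.span ℝ
      (Set.range fun k : Fin (2 * N) => ((oscMatrix N ω) ^ (k : ℕ)).mulVec (oscB N)) = ⊤ := by
  set S := Set.range fun k : Fin (2 * N) => ((oscMatrix N ω) ^ (k : ℕ)).mulVec (oscB N) with hS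
  -- the map m ↦ -ω m ^ 2 is injective
  have hinj : Function.Injective (fun m : Fin N => -(ω m) ^ 2) := by
    intro a b hab
    simp only [neg_inj] at hab
    have hfac : (ω a - ω b) * (ω a + ω b) = 0 := by nlinarith
    rcases mul_eq_zero.mp hfac with h | h
    · exact hdist (by linarith)
    · exfalso; have ha := hpos a; have hb := hpos b; linarith
  set W : Matrix (Fin N) (Fin N) ℝ := Matrix.vandermonde (fun m => -(ω m) ^ 2) with hWdef
  have hW : IsUnit W.det := by
    rw [isUnit_iff_ne_zero]
    exact Matrix.det_vandermonde_ne_zero_iff.mpr hinj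
  -- membership of the special vectors
  have hvE : ∀ j : Fin N, vE N ω (j : ℕ) ∈ Submodule.span ℝ S := by
    intro j
    apply Submodule.subset_span
    exact ⟨⟨2 * (j : ℕ), by omega⟩, pow_mulVec_even ω j⟩
  have hvO : ∀ j : Fin N, vO N ω (j : ℕ) ∈ Submodule.span ℝ S := by
    intro j
    apply Submodule.subset_span
    exact ⟨⟨2 * (j : ℕ) + 1, by omega⟩, pow_mulVec_odd ω j⟩
  -- each standard basis vector is in the span
  have hsingle : ∀ i : Fin (2 * N), Pi.single i (1 : ℝ) ∈ Submodule.span ℝ S := by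
    intro i
    set m : Fin N := ⟨(i : ℕ) / 2, by omega⟩ with hm
    set c : Fin N → ℝ := W⁻¹.mulVec (Pi.single m 1) with hc
    have hWc : W.mulVec c = Pi.single m 1 := by
      rw [hc, mulVec_mulVec, Matrix.mul_nonsing_inv _ hW, one_mulVec]
    by_cases hpar : (i : ℕ) % 2 = 1
    · -- use the vE vectors
      have key : Pi.single i (1 : ℝ) = ∑ j : Fin N, c j • vE N ω (j : ℕ) := by
        funext i'
        rw [Finset.sum_apply]
        by_cases hp' : (i' : ℕ) % 2 = 1
        · have : ∑ j : Fin N, (c j • vE N ω (j : ℕ)) i'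
              = W.mulVec c ⟨(i' : ℕ) / 2, by omega⟩ := by
            rw [mulVec, dotProduct]
            apply Finset.sum_congr rfl
            intro j _
            simp only [vE, hp', if_true, Pi.smul_apply, smul_eq_mul, hWdef,
              Matrix.vandermonde, Matrix.of_apply]
            ring
          rw [this, hWc]
          have hiff : i' = i ↔ (⟨(i' : ℕ) / 2, by omega⟩ : Fin N) = m := by
            constructor
            · rintro rfl; rfl
            · intro hh
              have : (i' : ℕ) / 2 = (i : ℕ) / 2 := congrArg Fin.val hh
              exact Fin.ext (by omega)
          simp only [Pi.single_apply]
          exact if_congr hiff rfl rfl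
        · have hne : i' ≠ i := fun hh => hp' (hh ▸ hpar)
          rw [Pi.single_apply, if_neg hne]
          apply Eq.symm
          apply Finset.sum_eq_zero
          intro j _
          simp [vE, hp']
      rw [key]
      exact Submodule.sum_mem _ fun j _ => Submodule.smul_mem _ _ (hvE j)
    · -- even case : use the vO vectors
      have hpar0 : (i : ℕ) % 2 = 0 := by omega
      have key : Pi.single i (1 : ℝ) = ∑ j : Fin N, c j • vO N ω (j : ℕ) := by
        funext i'
        rw [Finset.sum_apply]
        by_cases hp' : (i' : ℕ) % 2 = 0
        · have : ∑ j : Fin N, (c j • vO N ω (j : ℕ)) i'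
              = W.mulVec c ⟨(i' : ℕ) / 2, by omega⟩ := by
            rw [mulVec, dotProduct]
            apply Finset.sum_congr rfl
            intro j _
            simp only [vO, hp', if_true, Pi.smul_apply, smul_eq_mul, hWdef,
              Matrix.vandermonde, Matrix.of_apply]
            ring
          rw [this, hWc]
          have hiff : i' = i ↔ (⟨(i' : ℕ) / 2, by omega⟩ : Fin N) = m := by
            constructor
            · rintro rfl; rfl
            · intro hh
              have : (i' : ℕ) / 2 = (i : ℕ) / 2 := congrArg Fin.val hh
              exact Fin.ext (by omega)
          simp only [Pi.single_apply]
          exact if_congr hiff rfl rfl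
        · have hne : i' ≠ i := fun hh => hp' (hh ▸ hpar0)
          rw [Pi.single_apply, if_neg hne]
          apply Eq.symm
          apply Finset.sum_eq_zero
          intro j _
          simp [vO, hp']
      rw [key]
      exact Submodule.sum_mem _ fun j _ => Submodule.smul_mem _ _ (hvO j)
  -- conclude
  rw [eq_top_iff]
  rintro x -
  have hx : x = ∑ i, Pi.single i (x i) := (Finset.univ_sum_single x).symm
  rw [hx]
  refine Submodule.sum_mem _ fun i _ => ?_
  have : Pi.single i (x i) = x i • (Pi.single i 1 : Fin (2 * N) → ℝ) := by
    funext i'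
    simp [Pi.single_apply, Pi.smul_apply]
  rw [this]
  exact Submodule.smul_mem _ _ (hsingle i)
end
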